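/- arXiv:1903.09619 — 5 statements merged into one kernel-verified Lean document; each statement's English description precedes it below -/
import Mathlib

section
/- Let n > 1 be a natural number. Then H(n) equals the 2-adic valuation of n, plus the sum over all odd primes p dividing n of (the multiplicity of p in n) times (H(p) - 1), plus 1 if n is odd (and plus 0 if n is even). Equivalently, writing n = 2^α · p₁^{α₁} ⋯ p_r^{α_r} with p₁, …, p_r distinct odd primes and α, αᵢ ≥ 0: if α > 0 then H(n) = α + Σᵢ αᵢ(H(pᵢ) − 1), and if α = 0 then H(n) = Σᵢ αᵢ(H(pᵢ) − 1) + 1. -/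
/-- The height function: H(1) = 0 and H(n) = H(φ(n)) + 1 for n ≥ 2. -/
def H : ℕ → ℕ
  | 0 => 0
  | 1 => 0
  | n + 2 => H (Nat.totient (n + 2)) + 1
  decreasing_by exact Nat.totient_lt _ (by omega)

/-- The sum-of-heights function S(n) = ∑_{k=1}^n H(k). -/
def S (n : ℕ) : ℕ := ∑ k ∈ Finset.Icc 1 n, H k

lemma H_one : H 1 = 0 := by rw [H]
lemma H_eq {n : ℕ} (h : 2 ≤ n) : H n = H n.totient + 1 := by
  obtain ⟨k, rfl⟩ : ∃ k, n = k + 2 := ⟨n - 2, by omega⟩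
  rw [H]
lemma H_two : H 2 = 1 := by rw [H_eq le_rfl, Nat.totient_two, H_one]
lemma H_pos {n : ℕ} (h : 2 ≤ n) : 1 ≤ H n := by rw [H_eq h]; omega
lemma H_prime {p : ℕ} (hp : p.Prime) : H p = H (p - 1) + 1 := by
  rw [H_eq hp.two_le, Nat.totient_prime hp]

/-- the additive version of H -/
def g (n : ℕ) : ℕ := if Even n then H n else H n - 1

lemma g_even {n : ℕ} (h : Even n) : g n = H n := if_pos h
lemma g_odd {n : ℕ} (h : ¬ Even n) (h2 : 2 ≤ n) : g n + 1 = H n := by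
  rw [g, if_neg h]; have := H_pos h2; omega
lemma g_one : g 1 = 0 := by
  rw [g, if_neg (by decide), H_one]
lemma g_two : g 2 = 1 := by rw [g_even (by decide), H_two]

lemma totient_big {k : ℕ} (h : 3 ≤ k) : Even k.totient ∧ 2 ≤ k.totient := by
  have he := Nat.totient_even (by omega : 2 < k)
  have hp := Nat.totient_pos.mpr (by omega : 0 < k)
  obtain ⟨r, hr⟩ := he
  exact ⟨⟨r, hr⟩, by omega⟩

lemma g_mul : ∀ N m n : ℕ, 1 ≤ m → 1 ≤ n → m * n ≤ N → g (m * n) = g m + g n := by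
  intro N
  induction N with
  | zero => intro m n hm hn h; nlinarith
  | succ N IH =>
    have prime_case : ∀ p k : ℕ, p.Prime → 2 ≤ k → p * k ≤ N + 1 →
        g (p * k) = g p + g k := by
      intro p k hp hk hle
      have hpk2 : 2 ≤ p * k := by nlinarith [hp.two_le]
      have hlt : (p * k).totient < p * k := Nat.totient_lt _ (by omega)
      have hH : H (p * k) = H (p * k).totient + 1 := H_eq hpk2
      rcases eq_or_ne p 2 with rfl | hp2
      · -- p = 2
        rcases Nat.even_or_odd k with hke | hko
        · -- k even
          have h2k : (2 * k).totient = 2 * k.totient :=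
            Nat.totient_mul_of_prime_of_dvd Nat.prime_two hke.two_dvd
          rcases eq_or_lt_of_le hk with rfl | hk3
          · -- k = 2
            have h4 : H 4 = 2 := by
              rw [H_eq (by norm_num), show Nat.totient 4 = 2 by decide, H_two]
            rw [show (2:ℕ) * 2 = 4 by norm_num, g_even ⟨2, rfl⟩, h4, g_two]
          · -- k ≥ 3 even, so k ≥ 4
            obtain ⟨hte, ht2⟩ := totient_big hk3
            have hIH : g (2 * k.totient) = g 2 + g k.totient := by
              apply IH 2 k.totient (by omega) (by omega)
              rw [← h2k]; omega
            have e1 : g (2 * k.totient) = H (2 * k.totient) := g_even ⟨k.totient, by ring⟩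
            have e2 : g k.totient = H k.totient := g_even hte
            have e3 : g (2 * k) = H (2 * k) := g_even ⟨k, by ring⟩
            have e4 : g k = H k := g_even hke
            have hHk : H k = H k.totient + 1 := H_eq hk
            rw [hH, h2k] at *
            omega
        · -- k odd, k ≥ 3
          have hk3 : 3 ≤ k := by rcases hko with ⟨r, hr⟩; omega
          have h2k : (2 * k).totient = (2 - 1) * k.totient :=
            Nat.totient_mul_of_prime_of_not_dvd Nat.prime_two
              (by rw [Nat.two_dvd_ne_zero]; exact Nat.odd_iff.mp hko)
          have h2k' : (2 * k).totient = k.totient := by rw [h2k]; ring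
          have e3 : g (2 * k) = H (2 * k) := g_even ⟨k, by ring⟩
          have e4 : g k + 1 = H k := g_odd (Nat.not_even_iff_odd.mpr hko) hk
          have hHk : H k = H k.totient + 1 := H_eq hk
          rw [hH, h2k'] at *
          rw [g_two]
          omega
      · -- p odd
        have hpodd : Odd p := hp.odd_of_ne_two hp2
        have hp3 : 3 ≤ p := by have := hp.two_le; rcases hpodd with ⟨r, hr⟩; omega
        have hgp : g p + 1 = H p := g_odd (Nat.not_even_iff_odd.mpr hpodd) hp.two_le
        have hHp2 : 2 ≤ H p := by
          rw [H_prime hp]; have := H_pos (show 2 ≤ p - 1 by omega); omega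
        have key : H (p * k) + 1 = H p + H k := by
          by_cases hdvd : p ∣ k
          · have hk3 : 3 ≤ k := le_trans hp3 (Nat.le_of_dvd (by omega) hdvd)
            obtain ⟨hte, ht2⟩ := totient_big hk3
            have htot : (p * k).totient = p * k.totient :=
              Nat.totient_mul_of_prime_of_dvd hp hdvd
            have hIH : g (p * k.totient) = g p + g k.totient := by
              apply IH _ _ (by omega) (by omega); rw [← htot]; omega
            have e1 : g (p * k.totient) = H (p * k.totient) := by
              apply g_even; rcases hte with ⟨r, hr⟩; exact ⟨p * r, by rw [hr]; ring⟩
            have e2 : g k.totient = H k.totient := g_even hte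
            have hHk : H k = H k.totient + 1 := H_eq hk
            rw [hH, htot]
            omega
          · have htot : (p * k).totient = (p - 1) * k.totient :=
              Nat.totient_mul_of_prime_of_not_dvd hp hdvd
            rcases eq_or_lt_of_le hk with rfl | hk3
            · have ht2 : (p * 2).totient = p - 1 := by
                rw [htot, Nat.totient_two, mul_one]
              rw [hH, ht2, H_two, ← H_prime hp]
            · obtain ⟨hte, ht2⟩ := totient_big hk3
              have hpe : Even (p - 1) := Nat.Odd.sub_odd hpodd odd_one
              have hIH : g ((p - 1) * k.totient) = g (p - 1) + g k.totient := by
                apply IH _ _ (by omega) (by omega); rw [← htot]; omega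
              have e1 : g ((p - 1) * k.totient) = H ((p - 1) * k.totient) := by
                apply g_even; rcases hpe with ⟨r, hr⟩
                exact ⟨r * k.totient, by rw [hr]; ring⟩
              have e2 : g k.totient = H k.totient := g_even hte
              have e3 : g (p - 1) = H (p - 1) := g_even hpe
              have hHk : H k = H k.totient + 1 := H_eq hk
              have hHp : H p = H (p - 1) + 1 := H_prime hp
              rw [hH, htot]
              omega
        rcases Nat.even_or_odd k with hke | hko
        · have e3 : g (p * k) = H (p * k) :=
            g_even (by rcases hke with ⟨r, hr⟩; exact ⟨p * r, by rw [hr]; ring⟩)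
          have e4 : g k = H k := g_even hke
          omega
        · have hpk_odd : ¬ Even (p * k) := by
            rw [Nat.even_mul]; push_neg
            exact ⟨Nat.not_even_iff_odd.mpr hpodd, Nat.not_even_iff_odd.mpr hko⟩
          have e3 : g (p * k) + 1 = H (p * k) := g_odd hpk_odd hpk2
          have e4 : g k + 1 = H k := g_odd (Nat.not_even_iff_odd.mpr hko) hk
          omega
    intro m n hm hn h
    rcases eq_or_lt_of_le hm with rfl | hm2
    · rw [one_mul, g_one]; omega
    rcases eq_or_lt_of_le hn with rfl | hn2
    · rw [mul_one, g_one]; omega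
    obtain ⟨p, m', hp, rfl⟩ : ∃ p m', p.Prime ∧ m = p * m' := by
      obtain ⟨m', hm'⟩ := m.minFac_dvd
      exact ⟨m.minFac, m', Nat.minFac_prime (by omega), hm'⟩
    have hp2 := hp.two_le
    have hm'1 : 1 ≤ m' := by
      rcases Nat.eq_zero_or_pos m' with rfl | h'
      · simp at hm2
      · exact h'
    rcases eq_or_lt_of_le hm'1 with rfl | hm'2
    · rw [mul_one] at *
      exact prime_case p n hp hn2 h
    · have hx : 1 ≤ m' * n := Nat.mul_pos (by omega) (by omega)
      have h' : p * (m' * n) ≤ N + 1 := by rw [← mul_assoc]; exact h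
      have h1 : 2 * (m' * n) ≤ p * (m' * n) := Nat.mul_le_mul_right _ hp2
      have e1 : g (p * (m' * n)) = g p + g (m' * n) :=
        prime_case p (m' * n) hp (by nlinarith) h'
      have e2 : g (m' * n) = g m' + g n := IH m' n (by omega) (by omega) (by omega)
      have e3 : g (p * m') = g p + g m' :=
        prime_case p m' hp hm'2 (le_trans (Nat.le_mul_of_pos_right _ (by omega)) h)
      rw [mul_assoc, e1, e2, e3]
      ring

lemma g_sum : ∀ n : ℕ, 1 ≤ n → g n = ∑ p ∈ n.primeFactors, n.factorization p * g p := by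
  intro n
  induction n using Nat.strong_induction_on with
  | _ n IH =>
    intro hn
    rcases eq_or_lt_of_le hn with rfl | h2
    · simp [g_one]
    · obtain ⟨p, m, hp, rfl⟩ : ∃ p m, p.Prime ∧ n = p * m := by
        obtain ⟨m, hm⟩ := n.minFac_dvd
        exact ⟨n.minFac, m, Nat.minFac_prime (by omega), hm⟩
      have hm1 : 1 ≤ m := by
        rcases Nat.eq_zero_or_pos m with rfl | h'
        · simp at h2
        · exact h'
      have hmlt : m < p * m := by nlinarith [hp.two_le]
      have hg : g (p * m) = g p + g m := g_mul (p * m) p m (by have := hp.two_le; omega) hm1 le_rfl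
      have hsum : ∀ k : ℕ, 1 ≤ k →
          ∑ q ∈ k.primeFactors, k.factorization q * g q
            = k.factorization.sum fun q e => e * g q := by
        intro k hk
        rw [Finsupp.sum, Nat.support_factorization]
      rw [hsum _ (by omega), hg, IH m hmlt hm1, hsum m hm1,
        Nat.factorization_mul hp.pos.ne' (by omega), hp.factorization,
        Finsupp.sum_add_index' (fun q => zero_mul (g q)) (fun q e1 e2 => add_mul _ _ (g q))]
      rw [Finsupp.sum_single_index (zero_mul (g p)), one_mul]


theorem shapiro_height_formula (n : ℕ) (hn : 1 < n) :
    H n = n.factorization 2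
        + ∑ p ∈ n.primeFactors.filter (fun p => p ≠ 2),
            n.factorization p * (H p - 1)
        + (if Odd n then 1 else 0) := by
  have hsum := g_sum n (by omega)
  have hsplit := Finset.sum_filter_add_sum_filter_not n.primeFactors
    (fun p => p = 2) (fun p => n.factorization p * g p)
  have h1 : ∑ p ∈ n.primeFactors.filter (fun p => p = 2),
      n.factorization p * g p = n.factorization 2 := by
    by_cases h2 : 2 ∈ n.primeFactors
    · rw [show n.primeFactors.filter (fun p => p = 2) = {2} by
        ext q; simp only [Finset.mem_filter, Finset.mem_singleton]
        constructor
        · rintro ⟨_, rfl⟩; rfl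
        · rintro rfl; exact ⟨h2, rfl⟩]
      rw [Finset.sum_singleton, g_two, mul_one]
    · rw [show n.primeFactors.filter (fun p => p = 2) = ∅ by
        ext q; simp only [Finset.mem_filter, Finset.notMem_empty, iff_false]
        rintro ⟨hq, rfl⟩; exact h2 hq]
      rw [Finset.sum_empty, Nat.factorization_eq_zero_of_not_dvd]
      intro hdvd
      exact h2 (Nat.mem_primeFactors.mpr ⟨Nat.prime_two, hdvd, by omega⟩)
  have h2 : ∑ p ∈ n.primeFactors.filter (fun p => p ≠ 2),
      n.factorization p * g p
      = ∑ p ∈ n.primeFactors.filter (fun p => p ≠ 2),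
          n.factorization p * (H p - 1) := by
    apply Finset.sum_congr rfl
    intro q hq
    simp only [Finset.mem_filter] at hq
    obtain ⟨hq1, hq2⟩ := hq
    have hqp : q.Prime := Nat.prime_of_mem_primeFactors hq1
    have hodd : Odd q := hqp.odd_of_ne_two hq2
    rw [g, if_neg (Nat.not_even_iff_odd.mpr hodd)]
  rcases Nat.even_or_odd n with he | ho
  · rw [if_neg (Nat.not_odd_iff_even.mpr he)]
    rw [← g_even he, hsum, ← hsplit, h1, h2, add_zero]
  · rw [if_pos ho, ← g_odd (Nat.not_even_iff_odd.mpr ho) (by omega), hsum,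
      ← hsplit, h1, h2]
end

section
/- Every odd natural number n > 1 with H(n) = k satisfies n > 2^{k−1}. -/
lemma H_of_two_le {n : ℕ} (hn : 2 ≤ n) : H n = H n.totient + 1 := by
  obtain ⟨m, rfl⟩ : ∃ m, n = m + 2 := ⟨n - 2, by omega⟩
  rw [H]

lemma totient_two_mul_le {m : ℕ} (hm : Even m) : 2 * m.totient ≤ m := by
  obtain ⟨j, rfl⟩ := hm
  have hj : j + j = 2 * j := by ring
  rw [hj] at *
  rcases Nat.eq_zero_or_pos j with rfl | hjpos
  · simp
  have : (2 * j).totient ≤ j := by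
    rw [Nat.totient]
    calc ((Finset.range (2 * j)).filter (2 * j).Coprime).card
        ≤ (Finset.range j).card := ?_
      _ = j := Finset.card_range j
    apply Finset.card_le_card_of_injOn (fun x => x / 2)
    · intro x hx
      simp only [Finset.mem_coe, Finset.mem_filter, Finset.mem_range] at hx
      have : x / 2 < j := by omega
      simpa using this
    · intro x hx y hy hxy
      have hxy' : x / 2 = y / 2 := hxy
      simp only [Finset.coe_filter, Finset.mem_range, Set.mem_setOf_eq] at hx hy
      have hx2 : ¬ (2 ∣ x) := by
        intro h
        have := Nat.Coprime.eq_one_of_dvd (Nat.Coprime.coprime_dvd_left ⟨j, rfl⟩ hx.2) h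
        omega
      have hy2 : ¬ (2 ∣ y) := by
        intro h
        have := Nat.Coprime.eq_one_of_dvd (Nat.Coprime.coprime_dvd_left ⟨j, rfl⟩ hy.2) h
        omega
      omega
  omega

lemma even_bound : ∀ m : ℕ, Even m → 2 ≤ m → 2 ^ (H m) ≤ m := by
  intro m
  induction m using Nat.strong_induction_on with
  | _ m ih =>
    intro hme hm2
    rw [H_of_two_le hm2]
    rcases eq_or_lt_of_le hm2 with rfl | hm3
    · norm_num [show Nat.totient 2 = 1 from rfl, H]
    · have hte : Even m.totient := Nat.totient_even hm3
      have htpos : 0 < m.totient := Nat.totient_pos.mpr (by omega)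
      have ht2 : 2 ≤ m.totient := by
        rcases hte with ⟨j, hj⟩; omega
      have := ih m.totient (Nat.totient_lt m (by omega)) hte ht2
      calc 2 ^ (H m.totient + 1) = 2 * 2 ^ (H m.totient) := by ring
        _ ≤ 2 * m.totient := by omega
        _ ≤ m := totient_two_mul_le hme

theorem odd_at_height_gt (n k : ℕ) (hn : 1 < n) (hodd : Odd n) (hH : H n = k) :
    2 ^ (k - 1) < n := by
  have hn3 : 2 < n := by
    rcases hodd with ⟨j, hj⟩; omega
  have hte : Even n.totient := Nat.totient_even hn3
  have htpos : 0 < n.totient := Nat.totient_pos.mpr (by omega)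
  have ht2 : 2 ≤ n.totient := by rcases hte with ⟨j, hj⟩; omega
  have hk : H n.totient + 1 = k := by rw [← H_of_two_le (by omega)]; exact hH
  have hbound := even_bound n.totient hte ht2
  have hlt := Nat.totient_lt n (by omega)
  have : k - 1 = H n.totient := by omega
  rw [this]
  omega
end

section
/- For every h ≥ 1, the largest even number at height h is 2·3^{h−1}: H(2·3^{h−1}) = h, and every even natural number n with H(n) = h satisfies n ≤ 2·3^{h−1}. -/
def f : ℕ → ℕ
  | 0 => 0
  | 1 => 0
  | n + 2 =>
    f ((n+2) / (n+2).minFac) + (if (n+2).minFac = 2 then 1 else f ((n+2).minFac - 1))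
decreasing_by
  · exact Nat.div_lt_self (by omega) (Nat.minFac_prime (by omega)).one_lt
  · have := Nat.minFac_le (n := n+2) (by omega); omega

lemma f_def (n : ℕ) (hn : 2 ≤ n) :
    f n = f (n / n.minFac) + (if n.minFac = 2 then 1 else f (n.minFac - 1)) := by
  match n, hn with
  | (m+2), _ => rw [f]

lemma f_one : f 1 = 0 := by rw [f]

lemma f_two : f 2 = 1 := by rw [f_def 2 le_rfl]; norm_num [f_one]

lemma f_peel : ∀ n, 2 ≤ n → ∀ p : ℕ, p.Prime → p ∣ n →
    f n = f (n / p) + (if p = 2 then 1 else f (p - 1)) := by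
  intro n
  induction n using Nat.strong_induction_on with
  | _ n ih =>
  intro hn p hp hpn
  set q := n.minFac with hq
  have hqp : q.Prime := Nat.minFac_prime (by omega)
  have hqd : q ∣ n := Nat.minFac_dvd n
  by_cases hpq : p = q
  · rw [hpq]; exact f_def n hn
  · have hcop : Nat.Coprime p q := (Nat.coprime_primes hp hqp).mpr hpq
    have hpq' : p ∣ n / q := (Nat.dvd_div_iff_mul_dvd hqd).mpr
      (Nat.Coprime.mul_dvd_of_dvd_of_dvd hcop.symm hqd hpn)
    have hqp' : q ∣ n / p := (Nat.dvd_div_iff_mul_dvd hpn).mpr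
      (Nat.Coprime.mul_dvd_of_dvd_of_dvd hcop hpn hqd)
    have hnq0 : 0 < n / q := Nat.div_pos (Nat.minFac_le (by omega)) hqp.pos
    have hnp0 : 0 < n / p := Nat.div_pos (Nat.le_of_dvd (by omega) hpn) hp.pos
    have h1 : 2 ≤ n / q := le_trans hp.two_le (Nat.le_of_dvd hnq0 hpq')
    have h2 : 2 ≤ n / p := le_trans hqp.two_le (Nat.le_of_dvd hnp0 hqp')
    have hlt1 : n / q < n := Nat.div_lt_self (by omega) hqp.one_lt
    have hlt2 : n / p < n := Nat.div_lt_self (by omega) hp.one_lt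
    have e1 := f_def n hn
    rw [← hq] at e1
    have e2 := ih (n / q) hlt1 h1 p hp hpq'
    have e3 := ih (n / p) hlt2 h2 q hqp hqp'
    rw [Nat.div_div_eq_div_mul, Nat.mul_comm, ← Nat.div_div_eq_div_mul] at e2
    omega

lemma f_mul : ∀ a, ∀ b, 1 ≤ a → 1 ≤ b → f (a * b) = f a + f b := by
  intro a
  induction a using Nat.strong_induction_on with
  | _ a ih =>
  intro b ha hb
  rcases Nat.lt_or_ge a 2 with h2 | h2
  · interval_cases a; simp [f_one]
  · set p := a.minFac with hp
    have hpp : p.Prime := Nat.minFac_prime (by omega)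
    have hpa : p ∣ a := Nat.minFac_dvd a
    have hab : p ∣ a * b := hpa.mul_right b
    have hab2 : 2 ≤ a * b := le_trans h2 (Nat.le_mul_of_pos_right a hb)
    have e1 := f_peel (a * b) hab2 p hpp hab
    have e2 := f_def a h2
    rw [← hp] at e2
    have hdiv : a * b / p = (a / p) * b := by
      rw [Nat.mul_comm, Nat.mul_div_assoc b hpa, Nat.mul_comm]
    have h0 : 1 ≤ a / p := Nat.div_pos (Nat.minFac_le (by omega)) hpp.pos
    have e3 := ih (a / p) (Nat.div_lt_self (by omega) hpp.one_lt) b h0 hb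
    rw [hdiv, e3] at e1
    omega

lemma f_pow (a k : ℕ) (ha : 1 ≤ a) : f (a ^ k) = k * f a := by
  induction k with
  | zero => simp [f_one]
  | succ k ihk => rw [pow_succ, f_mul _ _ (Nat.one_le_pow _ _ ha) ha, ihk]; ring

lemma f_prime (p : ℕ) (hp : p.Prime) : f p = if p = 2 then 1 else f (p - 1) := by
  have e := f_def p hp.two_le
  rw [hp.minFac_eq, Nat.div_self hp.pos, f_one] at e
  omega

lemma f_totient : ∀ n, 2 ≤ n → f n = f n.totient + (if 2 ∣ n then 1 else 0) := by
  intro n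
  induction n using Nat.strong_induction_on with
  | _ n ih =>
  intro hn
  have hpp : n.minFac.Prime := Nat.minFac_prime (by omega)
  have hpd : n.minFac ∣ n := Nat.minFac_dvd n
  obtain ⟨p, hp⟩ : ∃ p, p = n.minFac := ⟨_, rfl⟩
  rw [← hp] at hpp hpd
  obtain ⟨m, hm⟩ : ∃ m, m = n / p := ⟨_, rfl⟩
  have hrec : n = p * m := by rw [hm]; exact (Nat.mul_div_cancel' hpd).symm
  have hm1 : 1 ≤ m := by rw [hm]; exact Nat.div_pos (hp ▸ Nat.minFac_le (by omega)) hpp.pos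
  have hmlt : m < n := by rw [hm]; exact Nat.div_lt_self (by omega) hpp.one_lt
  have hp2iff : 2 ∣ n ↔ p = 2 := by
    constructor
    · intro h2; rw [hp]; exact (Nat.minFac_eq_two_iff n).mpr h2
    · intro h2; rw [← h2]; exact hpd
  by_cases hsq : p ∣ m
  · -- p^2 ∣ n
    have hm2 : 2 ≤ m := le_trans hpp.two_le (Nat.le_of_dvd hm1 hsq)
    have htot : n.totient = p * m.totient := by
      conv_lhs => rw [hrec]
      exact Nat.totient_mul_of_prime_of_dvd hpp hsq
    have htp : 1 ≤ m.totient := Nat.totient_pos.mpr (by omega)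
    have e1 : f n = f p + f m := by rw [hrec, f_mul p m hpp.one_le hm1]
    have e2 : f n.totient = f p + f m.totient := by
      rw [htot, f_mul p _ hpp.one_le htp]
    have e3 := ih m hmlt hm2
    have hiff : (2 ∣ n) ↔ (2 ∣ m) := by
      constructor
      · intro h2
        have h2' : p = 2 := hp2iff.mp h2
        rw [h2'] at hsq; exact hsq
      · intro h2
        refine dvd_trans h2 ?_
        rw [hm]; exact Nat.div_dvd_of_dvd hpd
    by_cases h2 : 2 ∣ n
    · rw [if_pos h2]; rw [if_pos (hiff.mp h2)] at e3; omega
    · rw [if_neg h2]; rw [if_neg (fun h => h2 (hiff.mpr h))] at e3; omega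
  · -- p ∥ n
    have hcop : Nat.Coprime p m := (Nat.Prime.coprime_iff_not_dvd hpp).mpr hsq
    have htot : n.totient = (p - 1) * m.totient := by
      conv_lhs => rw [hrec]
      rw [Nat.totient_mul hcop, Nat.totient_prime hpp]
    have e4 := f_prime p hpp
    rcases eq_or_lt_of_le hm1 with hm1' | hm2
    · -- m = 1, n = p
      have hnp : n = p := by rw [hrec, ← hm1', mul_one]
      by_cases h2 : p = 2
      · rw [hnp, h2]
        norm_num [Nat.totient_two, f_two, f_one]
      · have hodd : ¬ (2 ∣ n) := fun hh => h2 (hp2iff.mp hh)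
        rw [hnp] at hodd
        rw [hnp, Nat.totient_prime hpp, if_neg hodd]
        rw [if_neg h2] at e4
        omega
    · -- m ≥ 2
      have htp : 1 ≤ m.totient := Nat.totient_pos.mpr (by omega)
      have e1 : f n = f p + f m := by rw [hrec, f_mul p m hpp.one_le hm1]
      have e2 : f n.totient = f (p - 1) + f m.totient := by
        rw [htot, f_mul _ _ (by have := hpp.two_le; omega : 1 ≤ p - 1) htp]
      have e3 := ih m hmlt hm2
      have hmd : m ∣ n := by rw [hm]; exact Nat.div_dvd_of_dvd hpd
      by_cases h2 : p = 2
      · have h2n : 2 ∣ n := hp2iff.mpr h2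
        have h2m : ¬ (2 ∣ m) := h2 ▸ hsq
        rw [if_pos h2] at e4
        rw [h2] at e2; norm_num [f_one] at e2
        rw [if_neg h2m] at e3
        rw [if_pos h2n]
        omega
      · have h2n : ¬ (2 ∣ n) := fun hh => h2 (hp2iff.mp hh)
        have h2m : ¬ (2 ∣ m) := fun hh => h2n (dvd_trans hh hmd)
        rw [if_neg h2] at e4
        rw [if_neg h2m] at e3
        rw [if_neg h2n]
        omega

lemma f_even_pos (n : ℕ) (hn : 2 ≤ n) (hd : 2 ∣ n) : 1 ≤ f n := by
  obtain ⟨m, rfl⟩ := hd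
  have hm : 1 ≤ m := by omega
  rw [f_mul 2 m (by omega) hm, f_two]
  omega

lemma H_def (n : ℕ) (hn : 2 ≤ n) : H n = H n.totient + 1 := by
  match n, hn with
  | (m+2), _ => rw [H]

lemma H_zero : H 0 = 0 := by rw [H]

lemma H_eq_f : ∀ n, 2 ≤ n → H n = f n + (if 2 ∣ n then 0 else 1) := by
  intro n
  induction n using Nat.strong_induction_on with
  | _ n ih =>
  intro hn
  rcases eq_or_lt_of_le hn with h2 | h3
  · rw [← h2]
    rw [H_def 2 le_rfl]
    norm_num [Nat.totient_two, H_one, f_two]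
  · have hte : Even n.totient := Nat.totient_even h3
    have htp : 0 < n.totient := Nat.totient_pos.mpr (by omega)
    have ht2 : 2 ≤ n.totient := by
      obtain ⟨k, hk⟩ := hte; omega
    have htlt : n.totient < n := Nat.totient_lt n (by omega)
    have e1 := ih n.totient htlt ht2
    have htd : 2 ∣ n.totient := hte.two_dvd
    rw [if_pos htd] at e1
    have e2 := f_totient n hn
    have e3 := H_def n hn
    by_cases hd : 2 ∣ n
    · rw [if_pos hd] at e2 ⊢; omega
    · rw [if_neg hd] at e2 ⊢; omega

lemma f_bound : ∀ n : ℕ, (2 ≤ n → 2 ∣ n → n ≤ 2 * 3 ^ (f n - 1)) ∧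
    (¬ 2 ∣ n → n ≤ 3 ^ (f n)) := by
  intro n
  induction n using Nat.strong_induction_on with
  | _ n ih =>
  constructor
  · intro hn hd
    obtain ⟨m, hm⟩ := hd
    have hm1 : 1 ≤ m := by omega
    have hfn : f n = 1 + f m := by rw [hm, f_mul 2 m (by omega) hm1, f_two]
    have hmlt : m < n := by omega
    by_cases hdm : 2 ∣ m
    · have hm2 : 2 ≤ m := by omega
      have h1 := (ih m hmlt).1 hm2 hdm
      have hfm : 1 ≤ f m := f_even_pos m hm2 hdm
      have key : 2 * (2 * 3 ^ (f m - 1)) ≤ 2 * 3 ^ (f m) := by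
        have : (2 : ℕ) * 3 ^ (f m - 1) ≤ 3 * 3 ^ (f m - 1) := by
          apply Nat.mul_le_mul_right; omega
        calc 2 * (2 * 3 ^ (f m - 1)) ≤ 2 * (3 * 3 ^ (f m - 1)) := by omega
          _ = 2 * 3 ^ (f m - 1 + 1) := by ring
          _ = 2 * 3 ^ (f m) := by rw [Nat.sub_add_cancel hfm]
      have : n ≤ 2 * (2 * 3 ^ (f m - 1)) := by omega
      have hfn' : f n - 1 = f m := by omega
      rw [hfn']
      omega
    · have h1 := (ih m hmlt).2 hdm
      have hfn' : f n - 1 = f m := by omega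
      rw [hfn']
      omega
  · intro hd
    rcases Nat.lt_or_ge n 2 with h2 | h2
    · have : n = 1 := by omega
      rw [this, f_one]; norm_num
    · have hpp : n.minFac.Prime := Nat.minFac_prime (by omega)
      have hpd : n.minFac ∣ n := Nat.minFac_dvd n
      obtain ⟨p, hp⟩ : ∃ p, p = n.minFac := ⟨_, rfl⟩
      rw [← hp] at hpp hpd
      have hp2 : p ≠ 2 := by
        intro h; rw [h] at hpd; exact hd hpd
      have hp3 : 3 ≤ p := by
        have := hpp.two_le; omega
      obtain ⟨m, hm⟩ : ∃ m, m = n / p := ⟨_, rfl⟩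
      have hrec : n = p * m := by rw [hm]; exact (Nat.mul_div_cancel' hpd).symm
      have hm1 : 1 ≤ m := by rw [hm]; exact Nat.div_pos (hp ▸ Nat.minFac_le (by omega)) hpp.pos
      have hmlt : m < n := by
        rw [hm]; exact Nat.div_lt_self (by omega) hpp.one_lt
      have hdm : ¬ 2 ∣ m := fun hh => hd (hrec ▸ (hh.mul_left p))
      have hfn : f n = f p + f m := by rw [hrec, f_mul p m hpp.one_le hm1]
      have hfp : f p = f (p - 1) := by
        have := f_prime p hpp; rw [if_neg hp2] at this; exact this
      have hodd : ¬ 2 ∣ p := fun hh => hp2 ((Nat.prime_dvd_prime_iff_eq Nat.prime_two hpp).mp hh).symm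
      have hp1e : 2 ∣ p - 1 := by omega
      have hp1lt : p - 1 < n := by
        have : p ≤ n := Nat.le_of_dvd (by omega) hpd
        omega
      have h1 := (ih (p - 1) hp1lt).1 (by omega) hp1e
      have hfp1 : 1 ≤ f (p - 1) := f_even_pos (p - 1) (by omega) hp1e
      have hpbound : p ≤ 3 ^ (f p) := by
        have h3 : 3 ^ (f (p-1)) = 3 * 3 ^ (f (p-1) - 1) := by
          conv_lhs => rw [← Nat.sub_add_cancel hfp1]
          ring
        rw [hfp]
        have : 1 ≤ 3 ^ (f (p-1) - 1) := Nat.one_le_pow _ _ (by norm_num)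
        omega
      have h2m := (ih m hmlt).2 hdm
      calc n = p * m := hrec
        _ ≤ 3 ^ (f p) * 3 ^ (f m) := Nat.mul_le_mul hpbound h2m
        _ = 3 ^ (f n) := by rw [hfn, pow_add]

lemma H_top (h : ℕ) (hh : 1 ≤ h) : H (2 * 3 ^ (h - 1)) = h := by
  have h3 : 1 ≤ (3:ℕ) ^ (h - 1) := Nat.one_le_pow _ _ (by norm_num)
  have hn2 : 2 ≤ 2 * 3 ^ (h - 1) := by omega
  have hdvd : 2 ∣ 2 * 3 ^ (h - 1) := ⟨_, rfl⟩
  rw [H_eq_f _ hn2, if_pos hdvd, f_mul 2 _ (by omega) h3, f_two, f_pow 3 _ (by omega)]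
  have hf3 : f 3 = 1 := by
    have := f_prime 3 (by norm_num)
    rw [if_neg (by norm_num)] at this
    rw [this]; exact f_two
  rw [hf3]
  omega


theorem largest_even_at_height (h : ℕ) (hh : 1 ≤ h) :
    H (2 * 3 ^ (h - 1)) = h ∧
    ∀ n : ℕ, Even n → H n = h → n ≤ 2 * 3 ^ (h - 1) := by
  refine ⟨H_top h hh, ?_⟩
  intro n hev hH
  have hd : 2 ∣ n := hev.two_dvd
  rcases Nat.lt_or_ge n 2 with h2 | h2
  · interval_cases n
    · rw [H_zero] at hH; omega
    · rw [H_one] at hH; omega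
  · have := H_eq_f n h2
    rw [if_pos hd] at this
    have hfn : f n = h := by omega
    have := (f_bound n).1 h2 hd
    rw [hfn] at this
    exact this
end

section
/- For every natural number n ≥ 2, the height function satisfies the inequalities log(n/2)/log 3 + 1 ≤ H(n) ≤ log n/log 2 + 1, where log denotes the natural logarithm (on the real numbers). -/
lemma H_rec (n : ℕ) (h : 2 ≤ n) : H n = H n.totient + 1 := by
  obtain ⟨m, rfl⟩ : ∃ m, n = m + 2 := ⟨n - 2, by omega⟩
  rw [H]

local notation "v2" => padicValNat 2

-- 2^s + 1 ≤ 3^s for s ≥ 1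
lemma aux_pow (s : ℕ) (hs : 1 ≤ s) : 2 ^ s + 1 ≤ 3 ^ s := by
  induction s with
  | zero => omega
  | succ t ih =>
    rcases Nat.eq_or_lt_of_le hs with h | h
    · simp [← h]
    · have ht : 1 ≤ t := by omega
      have := ih ht
      have h2 : (2:ℕ) ^ (t+1) = 2 * 2 ^ t := by ring
      have h3 : (3:ℕ) ^ (t+1) = 3 * 3 ^ t := by ring
      omega

-- per-prime inequality: for even m > 0, (m+1) * 2^{v2 m} ≤ 3^{v2 m} * m
lemma aux_P {m : ℕ} (hm : Even m) (h0 : 0 < m) :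
    (m + 1) * 2 ^ v2 m ≤ 3 ^ v2 m * m := by
  have hdvd : 2 ∣ m := hm.two_dvd
  have hs : 1 ≤ v2 m := one_le_padicValNat_of_dvd h0.ne' hdvd
  have h2s : 2 ^ v2 m ≤ m := Nat.le_of_dvd h0 pow_padicValNat_dvd
  have h3s : 2 ^ v2 m + 1 ≤ 3 ^ v2 m := aux_pow _ hs
  calc (m + 1) * 2 ^ v2 m = m * 2 ^ v2 m + 2 ^ v2 m := by ring
    _ ≤ m * 2 ^ v2 m + m := by omega
    _ = (2 ^ v2 m + 1) * m := by ring
    _ ≤ 3 ^ v2 m * m := Nat.mul_le_mul_right _ h3s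

lemma totient_ne_zero {n : ℕ} (h : 0 < n) : n.totient ≠ 0 := (Nat.totient_pos.mpr h).ne'


lemma aux_V : ∀ n : ℕ, 2 ≤ n →
    (Odd n → n * 2 ^ v2 n.totient ≤ 3 ^ v2 n.totient * n.totient) ∧
    (Even n → n * 3 ^ v2 n * 2 ^ v2 n.totient ≤
      3 ^ (v2 n.totient + 1) * 2 ^ v2 n * n.totient) := by
  intro n
  induction n using Nat.strong_induction_on with
  | _ n ih =>
  intro hn
  constructor
  · -- odd case
    intro hodd
    set p := n.minFac with hp_def
    have hp : p.Prime := Nat.minFac_prime (by omega)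
    have hpd : p ∣ n := Nat.minFac_dvd n
    have hp2 : p ≠ 2 := by
      intro h
      rw [h] at hpd
      exact (Nat.not_even_iff_odd.mpr hodd) ((even_iff_two_dvd).mpr hpd)
    have hp3 : 3 ≤ p := by
      rcases hp.two_le.lt_or_eq with h | h
      · omega
      · omega
    obtain ⟨k, hk⟩ := hpd
    have hk1 : 1 ≤ k := by
      rcases Nat.eq_zero_or_pos k with h | h
      · exfalso; rw [h, Nat.mul_zero] at hk; omega
      · exact h
    have hkodd : Odd k := by
      rcases Nat.even_or_odd k with h | h
      · exfalso; exact Nat.not_even_iff_odd.mpr hodd (hk ▸ h.mul_left p)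
      · exact h
    have hpodd : Odd p := hp.odd_of_ne_two hp2
    have hpnd : ¬ 2 ∣ p := by
      rw [Nat.two_dvd_ne_zero]; exact Nat.odd_iff.mp hpodd
    have hpm1even : Even (p - 1) := by
      have : Odd p := hpodd
      rcases this with ⟨t, ht⟩
      exact ⟨t, by omega⟩
    have hpm1pos : 0 < p - 1 := by omega
    have hP := aux_P hpm1even hpm1pos
    have hpP : p * 2 ^ v2 (p-1) ≤ 3 ^ v2 (p-1) * (p-1) := by
      have : p - 1 + 1 = p := by omega
      rwa [this] at hP
    rcases Nat.eq_or_lt_of_le hk1 with h1 | hk2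
    · -- k = 1, n = p prime
      have hnp : n = p := by rw [hk, ← h1, Nat.mul_one]
      rw [hnp, Nat.totient_prime hp]
      exact hpP
    · -- k ≥ 2
      have hklt : k < n := by
        rw [hk]; exact lt_mul_of_one_lt_left (by omega) (by omega)
      have hik := (ih k hklt (by omega)).1 hkodd
      by_cases hpk : p ∣ k
      · -- φ(n) = p * φ(k)
        have hφ : n.totient = p * k.totient := by
          rw [hk]; exact Nat.totient_mul_of_prime_of_dvd hp hpk
        have hv : v2 n.totient = v2 k.totient := by
          rw [hφ, padicValNat.mul (by omega) (totient_ne_zero (by omega)),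
            padicValNat.eq_zero_of_not_dvd hpnd, Nat.zero_add]
        rw [hv, hφ, hk]
        calc p * k * 2 ^ v2 k.totient = p * (k * 2 ^ v2 k.totient) := by ring
          _ ≤ p * (3 ^ v2 k.totient * k.totient) := Nat.mul_le_mul_left _ hik
          _ = 3 ^ v2 k.totient * (p * k.totient) := by ring
      · -- φ(n) = (p-1) * φ(k)
        have hcop : Nat.Coprime p k := (Nat.Prime.coprime_iff_not_dvd hp).mpr hpk
        have hφ : n.totient = (p - 1) * k.totient := by
          rw [hk, Nat.totient_mul hcop, Nat.totient_prime hp]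
        have hv : v2 n.totient = v2 (p-1) + v2 k.totient := by
          rw [hφ, padicValNat.mul (by omega) (totient_ne_zero (by omega))]
        rw [hv, hφ, hk, pow_add, pow_add]
        calc p * k * (2 ^ v2 (p-1) * 2 ^ v2 k.totient)
            = (p * 2 ^ v2 (p-1)) * (k * 2 ^ v2 k.totient) := by ring
          _ ≤ (3 ^ v2 (p-1) * (p-1)) * (3 ^ v2 k.totient * k.totient) :=
              Nat.mul_le_mul hpP hik
          _ = 3 ^ v2 (p-1) * 3 ^ v2 k.totient * ((p-1) * k.totient) := by ring
  · -- even case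
    intro heven
    obtain ⟨k, hk⟩ : ∃ k, n = 2 * k := heven.two_dvd
    have hk1 : 1 ≤ k := by omega
    rcases Nat.eq_or_lt_of_le hk1 with h1 | hk2
    · -- n = 2
      have hn2 : n = 2 := by omega
      subst hn2
      norm_num [Nat.totient_two, padicValNat.self one_lt_two]
    · have hklt : k < n := by omega
      rcases Nat.even_or_odd k with hke | hko
      · -- k even: φ(n) = 2 φ(k)
        have hφ : n.totient = 2 * k.totient := by
          rw [hk]; exact Nat.totient_mul_of_prime_of_dvd Nat.prime_two hke.two_dvd
        have hvn : v2 n = 1 + v2 k := by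
          rw [hk, padicValNat.mul (by omega) (by omega),
            padicValNat.self one_lt_two]
        have hvφ : v2 n.totient = 1 + v2 k.totient := by
          rw [hφ, padicValNat.mul (by omega) (totient_ne_zero (by omega)),
            padicValNat.self one_lt_two]
        have hik := (ih k hklt (by omega)).2 hke
        rw [hvφ, hφ, hvn, hk]
        calc 2 * k * 3 ^ (1 + v2 k) * 2 ^ (1 + v2 k.totient)
            = 12 * (k * 3 ^ v2 k * 2 ^ v2 k.totient) := by ring
          _ ≤ 12 * (3 ^ (v2 k.totient + 1) * 2 ^ v2 k * k.totient) :=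
              Nat.mul_le_mul_left _ hik
          _ ≤ 3 ^ (1 + v2 k.totient + 1) * 2 ^ (1 + v2 k) * (2 * k.totient) := by
              rw [pow_add, pow_add, pow_add, pow_add]
              ring_nf
              nlinarith [pow_pos (by norm_num : (0:ℕ) < 3) (v2 k.totient),
                pow_pos (by norm_num : (0:ℕ) < 2) (v2 k),
                Nat.totient_pos.mpr (show 0 < k by omega)]
      · -- k odd: φ(n) = φ(k), v2 n = 1
        have hcop : Nat.Coprime 2 k := Nat.coprime_two_left.mpr hko
        have hφ : n.totient = k.totient := by
          rw [hk, Nat.totient_mul hcop, Nat.totient_two, one_mul]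
        have hvn : v2 n = 1 := by
          rw [hk, padicValNat.mul (by omega) (by omega),
            padicValNat.self one_lt_two,
            padicValNat.eq_zero_of_not_dvd (by
              rw [Nat.two_dvd_ne_zero]; exact Nat.odd_iff.mp hko)]
        have hik := (ih k hklt (by omega)).1 hko
        rw [hvn, hφ, hk]
        calc 2 * k * 3 ^ 1 * 2 ^ v2 k.totient
            = 6 * (k * 2 ^ v2 k.totient) := by ring
          _ ≤ 6 * (3 ^ v2 k.totient * k.totient) := Nat.mul_le_mul_left _ hik
          _ = 3 ^ (v2 k.totient + 1) * 2 ^ 1 * k.totient := by ring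



lemma tot_even {n : ℕ} (h : 3 ≤ n) : Even n.totient ∧ 2 ≤ n.totient := by
  have he : Even n.totient := Nat.totient_even (by omega)
  have hp : 0 < n.totient := Nat.totient_pos.mpr (by omega)
  refine ⟨he, ?_⟩
  rcases he with ⟨t, ht⟩
  omega

-- main lower-bound invariant
lemma aux_K : ∀ n : ℕ, 2 ≤ n →
    (Even n → n * 3 ^ v2 n ≤ 3 ^ H n * 2 ^ v2 n) ∧
    (Odd n → n ≤ 3 ^ (H n - 1)) := by
  intro n
  induction n using Nat.strong_induction_on with
  | _ n ih =>
  intro hn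
  rcases Nat.eq_or_lt_of_le hn with h2 | h3
  · -- n = 2
    constructor
    · intro _
      rw [← h2]
      have : H 2 = 1 := by rw [H_rec 2 le_rfl]; norm_num [Nat.totient_two, H]
      rw [this, show v2 2 = 1 from padicValNat.self one_lt_two]
      norm_num
    · intro hodd; exfalso; rw [← h2] at hodd; exact (Nat.not_even_iff_odd.mpr hodd) even_two
  · -- n ≥ 3
    set m := n.totient with hm_def
    obtain ⟨hme, hm2⟩ := tot_even h3
    have hmlt : m < n := Nat.totient_lt n (by omega)
    have hHn : H n = H m + 1 := H_rec n hn
    have hiK := (ih m hmlt hm2).1 hme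
    constructor
    · -- n even
      intro heven
      have hV := (aux_V n hn).2 heven
      -- n * 3^a * 2^b ≤ 3^(b+1) * 2^a * m ; m * 3^b ≤ 3^(H m) * 2^b
      have step : n * 3 ^ v2 n * 2 ^ v2 m * 3 ^ v2 m ≤
          3 ^ (v2 m + 1) * 2 ^ v2 n * (3 ^ H m * 2 ^ v2 m) := by
        calc n * 3 ^ v2 n * 2 ^ v2 m * 3 ^ v2 m
            ≤ 3 ^ (v2 m + 1) * 2 ^ v2 n * m * 3 ^ v2 m :=
              Nat.mul_le_mul_right _ hV
          _ = 3 ^ (v2 m + 1) * 2 ^ v2 n * (m * 3 ^ v2 m) := by ring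
          _ ≤ 3 ^ (v2 m + 1) * 2 ^ v2 n * (3 ^ H m * 2 ^ v2 m) :=
              Nat.mul_le_mul_left _ hiK
      have key : n * 3 ^ v2 n ≤ 3 ^ (H m + 1) * 2 ^ v2 n := by
        have hpos : 0 < 2 ^ v2 m * 3 ^ v2 m := by positivity
        apply Nat.le_of_mul_le_mul_right _ hpos
        calc n * 3 ^ v2 n * (2 ^ v2 m * 3 ^ v2 m)
            = n * 3 ^ v2 n * 2 ^ v2 m * 3 ^ v2 m := by ring
          _ ≤ 3 ^ (v2 m + 1) * 2 ^ v2 n * (3 ^ H m * 2 ^ v2 m) := step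
          _ = 3 ^ (H m + 1) * 2 ^ v2 n * (2 ^ v2 m * 3 ^ v2 m) := by ring
      rwa [hHn]
    · -- n odd
      intro hodd
      have hV := (aux_V n hn).1 hodd
      -- n * 2^b ≤ 3^b * m ; m * 3^b ≤ 3^(H m) * 2^b
      have key : n ≤ 3 ^ H m := by
        have hpos : 0 < 2 ^ v2 m * 3 ^ v2 m := by positivity
        apply Nat.le_of_mul_le_mul_right _ hpos
        calc n * (2 ^ v2 m * 3 ^ v2 m) = n * 2 ^ v2 m * 3 ^ v2 m := by ring
          _ ≤ 3 ^ v2 m * m * 3 ^ v2 m := Nat.mul_le_mul_right _ hV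
          _ = 3 ^ v2 m * (m * 3 ^ v2 m) := by ring
          _ ≤ 3 ^ v2 m * (3 ^ H m * 2 ^ v2 m) := Nat.mul_le_mul_left _ hiK
          _ = 3 ^ H m * (2 ^ v2 m * 3 ^ v2 m) := by ring
      rw [hHn]
      simpa using key

lemma lower_nat (n : ℕ) (hn : 2 ≤ n) : 3 * n ≤ 2 * 3 ^ H n := by
  have hH1 : 1 ≤ H n := by rw [H_rec n hn]; omega
  rcases Nat.even_or_odd n with he | ho
  · have hK := (aux_K n hn).1 he
    have ha : 1 ≤ v2 n := one_le_padicValNat_of_dvd (by omega) he.two_dvd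
    obtain ⟨a, hva⟩ : ∃ a, v2 n = a + 1 := ⟨v2 n - 1, by omega⟩
    rw [hva] at hK
    -- n * 3^(a+1) ≤ 3^(H n) * 2^(a+1)
    have h23 : (2:ℕ) ^ a ≤ 3 ^ a := Nat.pow_le_pow_left (by norm_num) a
    have : n * (3 * 3 ^ a) ≤ 3 ^ H n * (2 * 2 ^ a) := by
      calc n * (3 * 3 ^ a) = n * 3 ^ (a+1) := by ring
        _ ≤ 3 ^ H n * 2 ^ (a+1) := hK
        _ = 3 ^ H n * (2 * 2 ^ a) := by ring
    have : n * 3 * 3 ^ a ≤ 3 ^ H n * 2 * 3 ^ a := by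
      calc n * 3 * 3 ^ a = n * (3 * 3 ^ a) := by ring
        _ ≤ 3 ^ H n * (2 * 2 ^ a) := this
        _ ≤ 3 ^ H n * (2 * 3 ^ a) := by
            apply Nat.mul_le_mul_left
            exact Nat.mul_le_mul_left _ h23
        _ = 3 ^ H n * 2 * 3 ^ a := by ring
    have := Nat.le_of_mul_le_mul_right this (by positivity : 0 < 3 ^ a)
    omega
  · have hK := (aux_K n hn).2 ho
    have : 3 * n ≤ 3 * 3 ^ (H n - 1) := by omega
    have h3 : 3 * 3 ^ (H n - 1) = 3 ^ H n := by
      rw [← pow_succ']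
      congr 1
      omega
    omega

-- even totient halving
lemma two_totient_le : ∀ n : ℕ, Even n → 2 * n.totient ≤ n := by
  intro n
  induction n using Nat.strong_induction_on with
  | _ n ih =>
  intro he
  rcases Nat.eq_zero_or_pos n with h0 | h0
  · simp [h0]
  obtain ⟨k, hk⟩ : ∃ k, n = 2 * k := he.two_dvd
  have hk1 : 1 ≤ k := by omega
  rcases Nat.even_or_odd k with hke | hko
  · have hφ : n.totient = 2 * k.totient := by
      rw [hk]; exact Nat.totient_mul_of_prime_of_dvd Nat.prime_two hke.two_dvd
    have := ih k (by omega) hke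
    omega
  · have hφ : n.totient = k.totient := by
      rw [hk, Nat.totient_mul (Nat.coprime_two_left.mpr hko), Nat.totient_two, one_mul]
    have := Nat.totient_le k
    omega

lemma upper_even : ∀ n : ℕ, 2 ≤ n → Even n → 2 ^ H n ≤ n := by
  intro n
  induction n using Nat.strong_induction_on with
  | _ n ih =>
  intro hn he
  rcases Nat.eq_or_lt_of_le hn with h2 | h3
  · rw [← h2]
    have hH2 : H 2 = 1 := by rw [H_rec 2 le_rfl]; norm_num [Nat.totient_two, H]
    rw [hH2]; norm_num
  · obtain ⟨hme, hm2⟩ := tot_even h3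
    have hmlt : n.totient < n := Nat.totient_lt n (by omega)
    have hHn : H n = H n.totient + 1 := H_rec n hn
    have hih := ih n.totient hmlt hm2 hme
    have hhalf := two_totient_le n he
    rw [hHn, pow_succ]
    omega

lemma upper_nat (n : ℕ) (hn : 2 ≤ n) : 2 ^ (H n - 1) ≤ n := by
  rcases Nat.eq_or_lt_of_le hn with h2 | h3
  · rw [← h2]
    have hH2 : H 2 = 1 := by rw [H_rec 2 le_rfl]; norm_num [Nat.totient_two, H]
    rw [hH2]; norm_num
  · obtain ⟨hme, hm2⟩ := tot_even h3
    have hHn : H n = H n.totient + 1 := H_rec n hn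
    have := upper_even n.totient hm2 hme
    have hlt : n.totient < n := Nat.totient_lt n (by omega)
    rw [hHn]
    simpa using this.trans (le_of_lt hlt)

theorem pillai_inequalities (n : ℕ) (hn : 2 ≤ n) :
    Real.log ((n : ℝ) / 2) / Real.log 3 + 1 ≤ (H n : ℝ) ∧
    (H n : ℝ) ≤ Real.log (n : ℝ) / Real.log 2 + 1 := by
  have hH1 : 1 ≤ H n := by rw [H_rec n hn]; omega
  have hcast : ((H n - 1 : ℕ) : ℝ) = (H n : ℝ) - 1 := by
    push_cast [hH1]; ring
  have hnpos : (0:ℝ) < n := by positivity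
  constructor
  · -- lower
    have hnat : n ≤ 2 * 3 ^ (H n - 1) := by
      have h := lower_nat n hn
      have h3 : (3:ℕ) ^ H n = 3 * 3 ^ (H n - 1) := by
        rw [← pow_succ']; congr 1; omega
      omega
    have hr : (n : ℝ) / 2 ≤ (3:ℝ) ^ (H n - 1 : ℕ) := by
      rw [div_le_iff₀ (by norm_num : (0:ℝ) < 2)]
      calc (n:ℝ) ≤ ((2 * 3 ^ (H n - 1) : ℕ) : ℝ) := by exact_mod_cast hnat
        _ = (3:ℝ) ^ (H n - 1 : ℕ) * 2 := by push_cast; ring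
    have hlog : Real.log ((n:ℝ)/2) ≤ ((H n : ℝ) - 1) * Real.log 3 := by
      calc Real.log ((n:ℝ)/2) ≤ Real.log ((3:ℝ) ^ (H n - 1 : ℕ)) :=
            Real.log_le_log (by positivity) hr
        _ = ((H n - 1 : ℕ) : ℝ) * Real.log 3 := Real.log_pow _ _
        _ = ((H n : ℝ) - 1) * Real.log 3 := by rw [hcast]
    have h3pos : (0:ℝ) < Real.log 3 := Real.log_pos (by norm_num)
    have := (div_le_iff₀ h3pos).mpr hlog
    linarith
  · -- upper
    have hr : (2:ℝ) ^ (H n - 1 : ℕ) ≤ (n : ℝ) := by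
      exact_mod_cast upper_nat n hn
    have hlog : ((H n : ℝ) - 1) * Real.log 2 ≤ Real.log (n:ℝ) := by
      calc ((H n : ℝ) - 1) * Real.log 2 = ((H n - 1 : ℕ) : ℝ) * Real.log 2 := by
            rw [hcast]
        _ = Real.log ((2:ℝ) ^ (H n - 1 : ℕ)) := (Real.log_pow _ _).symm
        _ ≤ Real.log (n:ℝ) := Real.log_le_log (by positivity) hr
    have h2pos : (0:ℝ) < Real.log 2 := Real.log_pos (by norm_num)
    have := (le_div_iff₀ h2pos).mpr hlog
    linarith
end

section
/- Let β = log 2/(2 log 3), where log denotes the natural logarithm. If k ≥ 1 and n is a natural number with 2^{k−1} < n ≤ 2^k, then β·(k − 2) ≤ S(n)/n ≤ k (as inequalities of real numbers). -/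
lemma totient_two_mul_le_s17 : ∀ x, Nat.totient (2 * x) ≤ x := by
  intro x
  induction x using Nat.strong_induction_on with
  | _ x ih =>
    by_cases h2 : 2 ∣ x
    · rw [Nat.totient_mul_of_prime_of_dvd Nat.prime_two h2]
      obtain ⟨y, rfl⟩ := h2
      rcases Nat.eq_zero_or_pos y with rfl | hy
      · simp
      · have := ih y (by omega)
        omega
    · rw [Nat.totient_mul_of_prime_of_not_dvd Nat.prime_two h2]
      simpa using Nat.totient_le x

lemma claimC : ∀ m, 2 ∣ m → 2 ≤ m → 2 ^ H m ≤ m := by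
  intro m
  induction m using Nat.strong_induction_on with
  | _ m ih =>
    intro h2 hm
    rcases eq_or_lt_of_le hm with rfl | hm3
    · simp [H_two]
    · have hφeven : Even m.totient := Nat.totient_even hm3
      have hφpos : 0 < m.totient := Nat.totient_pos.mpr (by omega)
      have hφ2 : 2 ≤ m.totient := by
        rcases hφeven with ⟨t, ht⟩; omega
      have hφlt : m.totient < m := Nat.totient_lt m (by omega)
      have hIH := ih m.totient hφlt hφeven.two_dvd hφ2
      have hhalf : 2 * m.totient ≤ m := by
        obtain ⟨x, rfl⟩ := h2
        have := totient_two_mul_le_s17 x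
        omega
      rw [H_eq (by omega), pow_succ]
      calc 2 ^ H m.totient * 2 ≤ m.totient * 2 := Nat.mul_le_mul_right 2 hIH
        _ ≤ m := by omega

lemma H_le_of_le_two_pow {m k : ℕ} (hm : 1 ≤ m) (h : m ≤ 2 ^ k) : H m ≤ k := by
  rcases eq_or_lt_of_le hm with rfl | hm2
  · simp [H_one]
  rcases Nat.even_or_odd m with he | ho
  · have := claimC m he.two_dvd (by omega)
    exact (Nat.pow_le_pow_iff_right (by omega)).mp (this.trans h)
  · -- m odd ≥ 3
    have hm3 : 3 ≤ m := by rcases ho with ⟨t, rfl⟩; omega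
    have hφeven : Even m.totient := Nat.totient_even (by omega)
    have hφpos : 0 < m.totient := Nat.totient_pos.mpr (by omega)
    have hφ2 : 2 ≤ m.totient := by rcases hφeven with ⟨t, ht⟩; omega
    have hC := claimC m.totient hφeven.two_dvd hφ2
    have hφlt : m.totient < m := Nat.totient_lt m (by omega)
    have : 2 ^ H m.totient < 2 ^ k := by
      calc 2 ^ H m.totient ≤ m.totient := hC
        _ < m := hφlt
        _ ≤ 2 ^ k := h
    have hk := (Nat.pow_lt_pow_iff_right (a := 2) (by omega)).mp this
    rw [H_eq (by omega)]
    omega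

lemma H_two_mul_even : ∀ x, 2 ∣ x → 2 ≤ x → H (2 * x) = H x + 1 := by
  intro x
  induction x using Nat.strong_induction_on with
  | _ x ih =>
    intro h2 hx
    have hφ : Nat.totient (2 * x) = 2 * Nat.totient x :=
      Nat.totient_mul_of_prime_of_dvd Nat.prime_two h2
    rw [H_eq (by omega), hφ]
    rcases eq_or_lt_of_le hx with rfl | hx3
    · rw [Nat.totient_two, mul_one, H_two]
    · have hφeven : Even x.totient := Nat.totient_even hx3
      have hφpos : 0 < x.totient := Nat.totient_pos.mpr (by omega)
      have hφ2 : 2 ≤ x.totient := by rcases hφeven with ⟨t, ht⟩; omega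
      rw [ih x.totient (Nat.totient_lt x (by omega)) hφeven.two_dvd hφ2]
      conv_rhs => rw [H_eq (show 2 ≤ x by omega)]

lemma H_two_mul_odd {w : ℕ} (hw : ¬ 2 ∣ w) (h3 : 3 ≤ w) : H (2 * w) = H w := by
  rw [H_eq (by omega), Nat.totient_mul_of_prime_of_not_dvd Nat.prime_two hw]
  simp only [show (2:ℕ) - 1 = 1 from rfl, one_mul]
  conv_rhs => rw [H_eq (show 2 ≤ w by omega)]

lemma H_two_pow : ∀ b, H (2 ^ b) = b := by
  intro b
  induction b with
  | zero => simpa using H_one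
  | succ b ih =>
    rcases Nat.eq_zero_or_pos b with rfl | hb
    · simpa using H_two
    · have h2b : 2 ≤ 2 ^ b := by
        calc (2:ℕ) = 2 ^ 1 := rfl
          _ ≤ 2 ^ b := Nat.pow_le_pow_right (by omega) hb
      rw [pow_succ, mul_comm, H_two_mul_even (2 ^ b) (dvd_pow_self 2 (by omega)) h2b, ih]

lemma H_pow2_mul_odd : ∀ b, 1 ≤ b → ∀ w, ¬ 2 ∣ w → 3 ≤ w → H (2 ^ b * w) + 1 = b + H w := by
  intro b
  induction b with
  | zero => omega
  | succ b ih =>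
    intro _ w hw h3
    rcases Nat.eq_zero_or_pos b with rfl | hb
    · rw [pow_one, H_two_mul_odd hw h3]; omega
    · have h2b : 2 ≤ 2 ^ b * w := by
        have : 1 ≤ 2 ^ b := Nat.one_le_two_pow
        nlinarith
      rw [pow_succ, mul_comm (2^b) 2, mul_assoc,
        H_two_mul_even (2 ^ b * w) (Dvd.dvd.mul_right (dvd_pow_self 2 (by omega)) w) h2b]
      have := ih hb w hw h3
      omega

lemma lemR {u : ℕ} (hu : ¬ 2 ∣ u) (h3 : 3 ≤ u) :
    2 ^ u.primeFactors.card ∣ u.totient ∧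
    2 ^ u.primeFactors.card * u ≤ 3 ^ u.primeFactors.card * u.totient := by
  have hu0 : u ≠ 0 := by omega
  have hodd : ∀ p ∈ u.primeFactors, p.Prime ∧ 3 ≤ p := by
    intro p hp
    have hpp := Nat.prime_of_mem_primeFactors hp
    have hpd := Nat.dvd_of_mem_primeFactors hp
    refine ⟨hpp, ?_⟩
    rcases hpp.two_le.lt_or_eq with h | h
    · omega
    · exact absurd (h ▸ hpd) hu
  have hself : u.factorization.prod (fun p k => p ^ k) = u :=
    Nat.factorization_prod_pow_eq_self hu0
  have htot : u.totient = u.factorization.prod fun p k => p ^ (k - 1) * (p - 1) :=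
    Nat.totient_eq_prod_factorization hu0
  have hsupp : u.factorization.support = u.primeFactors := Nat.support_factorization u
  have hodd2 : ∀ p ∈ u.primeFactors, ¬ 2 ∣ p := by
    intro p hp h2p
    obtain ⟨hpp, hp3⟩ := hodd p hp
    have := (Nat.prime_dvd_prime_iff_eq Nat.prime_two hpp).mp h2p
    omega
  have hu_eq : u = ∏ p ∈ u.primeFactors, p ^ u.factorization p := by
    conv_lhs => rw [← hself, Finsupp.prod, hsupp]
  have ht_eq : u.totient = ∏ p ∈ u.primeFactors,
      (p ^ (u.factorization p - 1) * (p - 1)) := by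
    rw [htot, Finsupp.prod, hsupp]
  have h2eq : ∏ p ∈ u.primeFactors, (2 * p ^ u.factorization p)
      = 2 ^ u.primeFactors.card * u := by
    rw [Finset.prod_mul_distrib, Finset.prod_const, ← hu_eq]
  have h3eq : ∏ p ∈ u.primeFactors, (3 * (p ^ (u.factorization p - 1) * (p - 1)))
      = 3 ^ u.primeFactors.card * u.totient := by
    rw [Finset.prod_mul_distrib, Finset.prod_const, ← ht_eq]
  constructor
  · rw [ht_eq, ← Finset.prod_const (b := 2)]
    apply Finset.prod_dvd_prod_of_dvd
    intro p hp
    obtain ⟨hpp, hp3⟩ := hodd p hp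
    have hp2 := hodd2 p hp
    exact Dvd.dvd.mul_left (show 2 ∣ p - 1 by omega) _
  · rw [← h2eq, ← h3eq]
    apply Finset.prod_le_prod'
    intro p hp
    obtain ⟨hpp, hp3⟩ := hodd p hp
    have hk : 1 ≤ u.factorization p := by
      rw [← hsupp] at hp
      exact Nat.one_le_iff_ne_zero.mpr (Finsupp.mem_support_iff.mp hp)
    set k := u.factorization p with hkdef
    have hpk : p ^ k = p * p ^ (k - 1) := by
      rw [← pow_succ']
      congr 1
      omega
    rw [hpk]
    calc 2 * (p * p ^ (k-1)) = (2 * p) * p ^ (k-1) := by ring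
      _ ≤ (3 * (p-1)) * p ^ (k-1) := Nat.mul_le_mul_right _ (by omega)
      _ = 3 * (p ^ (k-1) * (p-1)) := by ring

lemma claimO : ∀ u, ¬ 2 ∣ u → 3 ≤ u → 3 * u ≤ 3 ^ H u := by
  intro u
  induction u using Nat.strong_induction_on with
  | _ u ih =>
    intro hu h3
    set f := u.totient with hf
    have hf0 : f ≠ 0 := by
      have : 0 < f := Nat.totient_pos.mpr (by omega)
      omega
    have hfeven : 2 ∣ f := (Nat.totient_even (by omega)).two_dvd
    have hflt : f < u := Nat.totient_lt u (by omega)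
    set b := f.factorization 2 with hb
    set w := f / 2 ^ b with hwdef
    have hfw : 2 ^ b * w = f := Nat.ordProj_mul_ordCompl_eq_self f 2
    have hwodd : ¬ 2 ∣ w := Nat.not_dvd_ordCompl Nat.prime_two hf0
    have hb1 : 1 ≤ b := Nat.Prime.factorization_pos_of_dvd Nat.prime_two hf0 hfeven
    set r := u.primeFactors.card with hr
    obtain ⟨hdvd, hineq⟩ := lemR hu h3
    -- r ≤ b
    have hrb : r ≤ b := by
      have hcop : Nat.Coprime (2 ^ r) w :=
        Nat.Coprime.pow_left r ((Nat.prime_two.coprime_iff_not_dvd).mpr hwodd)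
      have : (2:ℕ) ^ r ∣ 2 ^ b * w := hfw ▸ hdvd
      have h2 : (2:ℕ) ^ r ∣ 2 ^ b := hcop.dvd_of_dvd_mul_right this
      exact (Nat.pow_dvd_pow_iff_le_right (by omega)).mp h2
    -- u ≤ 3^b * w
    have hkey : u ≤ 3 ^ b * w := by
      have h1 : 2 ^ r * u ≤ 2 ^ r * (3 ^ r * 2 ^ (b - r) * w) := by
        calc 2 ^ r * u ≤ 3 ^ r * f := hineq
          _ = 3 ^ r * (2 ^ b * w) := by rw [hfw]
          _ = 2 ^ r * (3 ^ r * 2 ^ (b - r) * w) := by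
              have hsplit : (2:ℕ) ^ b = 2 ^ r * 2 ^ (b - r) := by
                rw [← pow_add, show r + (b - r) = b by omega]
              rw [hsplit]; ring
      have h2 : u ≤ 3 ^ r * 2 ^ (b - r) * w :=
        Nat.le_of_mul_le_mul_left h1 (Nat.pow_pos (by omega))
      calc u ≤ 3 ^ r * 2 ^ (b - r) * w := h2
        _ ≤ 3 ^ r * 3 ^ (b - r) * w := by
            apply Nat.mul_le_mul_right
            exact Nat.mul_le_mul_left _ (Nat.pow_le_pow_left (by omega) _)
        _ = 3 ^ b * w := by rw [← pow_add, show r + (b - r) = b by omega]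
    have hHu : H u = H f + 1 := H_eq (by omega)
    rcases Nat.lt_or_ge w 3 with hw3 | hw3
    · -- w = 1
      have hw1 : w = 1 := by interval_cases w <;> omega
      have hfpow : f = 2 ^ b := by rw [← hfw, hw1, mul_one]
      have : H f = b := by rw [hfpow, H_two_pow]
      rw [hHu, this]
      calc 3 * u ≤ 3 * (3 ^ b * 1) := by
            rw [← hw1]; exact Nat.mul_le_mul_left 3 hkey
        _ = 3 ^ (b + 1) := by ring
    · -- w ≥ 3
      have hwlt : w < u := by
        have : w ≤ f := Nat.div_le_self f _
        omega
      have hIH := ih w hwlt hwodd hw3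
      have hHf : H f + 1 = b + H w := by rw [← hfw]; exact H_pow2_mul_odd b hb1 w hwodd hw3
      rw [hHu]
      calc 3 * u ≤ 3 * (3 ^ b * w) := Nat.mul_le_mul_left 3 hkey
        _ = 3 ^ b * (3 * w) := by ring
        _ ≤ 3 ^ b * 3 ^ H w := Nat.mul_le_mul_left _ hIH
        _ = 3 ^ (b + H w) := by rw [← pow_add]
        _ = 3 ^ (H f + 1) := by rw [hHf]

lemma claimP (m : ℕ) (hm : 1 ≤ m) : m ≤ 3 ^ H m := by
  set a := m.factorization 2 with ha
  set u := m / 2 ^ a with hu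
  have hm0 : m ≠ 0 := by omega
  have hmu : 2 ^ a * u = m := Nat.ordProj_mul_ordCompl_eq_self m 2
  have huodd : ¬ 2 ∣ u := Nat.not_dvd_ordCompl Nat.prime_two hm0
  have hu1 : 1 ≤ u := by
    rcases Nat.eq_zero_or_pos u with h | h
    · rw [h, mul_zero] at hmu; omega
    · exact h
  rcases Nat.lt_or_ge u 3 with hu3 | hu3
  · -- u = 1, m = 2^a
    have hu1' : u = 1 := by interval_cases u <;> omega
    have : m = 2 ^ a := by rw [← hmu, hu1', mul_one]
    rw [this, H_two_pow]
    exact Nat.pow_le_pow_left (by omega) a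
  · have hO := claimO u huodd hu3
    rcases Nat.eq_zero_or_pos a with ha0 | ha1
    · have : m = u := by rw [← hmu, ha0, pow_zero, one_mul]
      rw [this]
      calc u ≤ 3 * u := by omega
        _ ≤ 3 ^ H u := hO
    · have hHm : H m + 1 = a + H u := by rw [← hmu]; exact H_pow2_mul_odd a ha1 u huodd hu3
      have h3m : 3 * m ≤ 3 * 3 ^ H m := by
        calc 3 * m = 3 * (2 ^ a * u) := by rw [hmu]
          _ = 2 ^ a * (3 * u) := by ring
          _ ≤ 2 ^ a * 3 ^ H u := Nat.mul_le_mul_left _ hO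
          _ ≤ 3 ^ a * 3 ^ H u := Nat.mul_le_mul_right _ (Nat.pow_le_pow_left (by omega) _)
          _ = 3 ^ (a + H u) := by rw [← pow_add]
          _ = 3 ^ (H m + 1) := by rw [hHm]
          _ = 3 * 3 ^ H m := by rw [pow_succ]; ring
      omega

theorem sum_heights_over_n_bounds (k n : ℕ) (hk : 1 ≤ k)
    (h1 : 2 ^ (k - 1) < n) (h2 : n ≤ 2 ^ k) :
    Real.log 2 / (2 * Real.log 3) * ((k : ℝ) - 2) ≤ (S n : ℝ) / (n : ℝ) ∧
    (S n : ℝ) / (n : ℝ) ≤ (k : ℝ) := by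
  have hn0 : 0 < n := lt_of_le_of_lt (Nat.zero_le _) h1
  have hnR : (0:ℝ) < n := by exact_mod_cast hn0
  have hlog2 : 0 < Real.log 2 := Real.log_pos (by norm_num)
  have hlog3 : 0 < Real.log 3 := Real.log_pos (by norm_num)
  constructor
  · -- lower bound
    rcases Nat.lt_or_ge k 3 with hk3 | hk3
    · have hL : Real.log 2 / (2 * Real.log 3) * ((k:ℝ) - 2) ≤ 0 := by
        apply mul_nonpos_of_nonneg_of_nonpos
        · positivity
        · have : (k:ℝ) ≤ 2 := by exact_mod_cast Nat.lt_succ_iff.mp hk3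
          linarith
      have : (0:ℝ) ≤ (S n : ℝ) / n := div_nonneg (Nat.cast_nonneg _) hnR.le
      linarith
    · set j := k - 2 with hj
      have hjc : (j : ℝ) = (k:ℝ) - 2 := by
        have : (j:ℕ) + 2 = k := by omega
        push_cast [← this]; ring
      set c : ℝ := j * Real.log 2 / Real.log 3 with hc
      have hc0 : 0 ≤ c := by positivity
      have hpt : ∀ m ∈ Finset.Icc (n/2+1) n, c ≤ (H m : ℝ) := by
        intro m hm
        rw [Finset.mem_Icc] at hm
        have hm1 : 2 ^ j < m := by
          have h2j : 2 ^ (k-1) = 2 * 2 ^ j := by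
            rw [← pow_succ']
            congr 1
            omega
          omega
        have hP : m ≤ 3 ^ H m := claimP m (by omega)
        have h1R : ((2:ℝ)) ^ j ≤ (m:ℝ) := by exact_mod_cast hm1.le
        have h2R : (m:ℝ) ≤ (3:ℝ) ^ H m := by exact_mod_cast hP
        have hkey : (j:ℝ) * Real.log 2 ≤ (H m : ℝ) * Real.log 3 := by
          calc (j:ℝ) * Real.log 2 = Real.log (2 ^ j) := (Real.log_pow 2 j).symm
            _ ≤ Real.log (3 ^ H m) := Real.log_le_log (by positivity) (h1R.trans h2R)
            _ = (H m : ℝ) * Real.log 3 := Real.log_pow 3 _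
        rw [hc, div_le_iff₀ hlog3]
        exact hkey
      have hsub : Finset.Icc (n/2+1) n ⊆ Finset.Icc 1 n := by
        intro m hm
        rw [Finset.mem_Icc] at *
        omega
      have hS1 : ∑ m ∈ Finset.Icc (n/2+1) n, H m ≤ S n :=
        Finset.sum_le_sum_of_subset hsub
      have hcard : (Finset.Icc (n/2+1) n).card = n - n/2 := by
        rw [Nat.card_Icc]; omega
      have hhalf : (n:ℝ)/2 * c ≤ (S n : ℝ) := by
        have hcast : (n:ℝ)/2 ≤ ((n - n/2 : ℕ) : ℝ) := by
          have hd : ((n/2 : ℕ) : ℝ) ≤ (n:ℝ)/2 := by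
            have := Nat.cast_div_le (m := n) (n := 2) (α := ℝ)
            simpa using this
          have hsub2 : ((n - n/2 : ℕ) : ℝ) = (n:ℝ) - ((n/2 : ℕ):ℝ) := by
            have : (n/2 : ℕ) ≤ n := Nat.div_le_self n 2
            push_cast [this]
            ring
          rw [hsub2]
          linarith
        calc (n:ℝ)/2 * c ≤ ((n - n/2 : ℕ) : ℝ) * c := mul_le_mul_of_nonneg_right hcast hc0
          _ = ((Finset.Icc (n/2+1) n).card : ℝ) * c := by rw [hcard]
          _ = ∑ m ∈ Finset.Icc (n/2+1) n, c := by rw [Finset.sum_const, nsmul_eq_mul]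
          _ ≤ ∑ m ∈ Finset.Icc (n/2+1) n, (H m : ℝ) := Finset.sum_le_sum hpt
          _ = ((∑ m ∈ Finset.Icc (n/2+1) n, H m : ℕ) : ℝ) := by push_cast; rfl
          _ ≤ (S n : ℝ) := by exact_mod_cast hS1
      rw [le_div_iff₀ hnR]
      calc Real.log 2 / (2 * Real.log 3) * ((k:ℝ) - 2) * n
          = (n:ℝ)/2 * c := by
            rw [hc, ← hjc]
            field_simp
        _ ≤ (S n : ℝ) := hhalf
  · -- upper bound
    have hSk : S n ≤ n * k := by
      have : S n ≤ ∑ m ∈ Finset.Icc 1 n, k := by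
        apply Finset.sum_le_sum
        intro m hm
        rw [Finset.mem_Icc] at hm
        exact H_le_of_le_two_pow hm.1 (hm.2.trans h2)
      simpa [Nat.card_Icc, mul_comm] using this
    rw [div_le_iff₀ hnR]
    calc (S n : ℝ) ≤ (n:ℝ) * k := by exact_mod_cast hSk
      _ = k * n := by ring
end
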